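/- Let b ≥ 2 and let J_{n,1} be uniformly distributed on {0,1,…,n-1} with J_{n,2} = n - 1 - J_{n,1}. Then for the function f(x) = x⁴ + (x²-x³)(1+√(x²+1)), the random variable f(J_{n,1}/n) + f(J_{n,2}/n) is stochastically dominated by 1 - U(1-U), where U is uniform on [0,1]. -/

import Mathlib

open MeasureTheory Classical

noncomputable def opNormSq (x : ℝ) : ℝ :=
  x ^ 4 + (x ^ 2 - x ^ 3) * (1 + Real.sqrt (x ^ 2 + 1))

lemma sqrt_le_aux (x : ℝ) : Real.sqrt (x ^ 2 + 1) ≤ 1 + x ^ 2 / 2 := by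
  nlinarith [Real.sq_sqrt (show (0:ℝ) ≤ x ^ 2 + 1 by positivity),
    Real.sqrt_nonneg (x ^ 2 + 1), sq_nonneg (x ^ 2 / 2),
    sq_nonneg (Real.sqrt (x ^ 2 + 1) - (1 + x ^ 2 / 2))]

lemma opNormSq_le (x : ℝ) (hx0 : 0 ≤ x) (hx1 : x ≤ 1) :
    opNormSq x ≤ x - x * (1 - x) * (1 - x + x ^ 2 - x ^ 3 / 2) := by
  have hs := sqrt_le_aux x
  have hnn : 0 ≤ x ^ 2 - x ^ 3 := by nlinarith
  have h1 : (x ^ 2 - x ^ 3) * (1 + Real.sqrt (x ^ 2 + 1)) ≤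
      (x ^ 2 - x ^ 3) * (2 + x ^ 2 / 2) := by
    apply mul_le_mul_of_nonneg_left _ hnn
    linarith
  unfold opNormSq
  nlinarith [h1]

lemma key_ineq (x y : ℝ) (hx : 0 ≤ x) (hy : 0 ≤ y) (hxy : x + y ≤ 1) :
    opNormSq x + opNormSq y ≤ x + y - x * y := by
  have hx1 : x ≤ 1 := by linarith
  have hy1 : y ≤ 1 := by linarith
  have h1 := opNormSq_le x hx hx1
  have h2 := opNormSq_le y hy hy1
  have px : (1:ℝ)/2 ≤ 1 - x + x ^ 2 - x ^ 3 / 2 := by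
    nlinarith [mul_nonneg (sub_nonneg.2 hx1) (show (0:ℝ) ≤ x ^ 2 - x + 1 by nlinarith [sq_nonneg (2*x-1)])]
  have py : (1:ℝ)/2 ≤ 1 - y + y ^ 2 - y ^ 3 / 2 := by
    nlinarith [mul_nonneg (sub_nonneg.2 hy1) (show (0:ℝ) ≤ y ^ 2 - y + 1 by nlinarith [sq_nonneg (2*y-1)])]
  have hA : x * y * (1 - x + x ^ 2 - x ^ 3 / 2) ≤ x * (1 - x) * (1 - x + x ^ 2 - x ^ 3 / 2) := by
    apply mul_le_mul_of_nonneg_right _ (by linarith)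
    apply mul_le_mul_of_nonneg_left (by linarith) hx
  have hB : x * y * (1 - y + y ^ 2 - y ^ 3 / 2) ≤ y * (1 - y) * (1 - y + y ^ 2 - y ^ 3 / 2) := by
    have h : y * x * (1 - y + y ^ 2 - y ^ 3 / 2) ≤ y * (1 - y) * (1 - y + y ^ 2 - y ^ 3 / 2) := by
      apply mul_le_mul_of_nonneg_right _ (by linarith)
      apply mul_le_mul_of_nonneg_left (by linarith) hy
    nlinarith [h]
  have hxy0 : 0 ≤ x * y := mul_nonneg hx hy
  have hC : x * y ≤ x * y * (1 - x + x ^ 2 - x ^ 3 / 2) + x * y * (1 - y + y ^ 2 - y ^ 3 / 2) := by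
    nlinarith [hxy0, px, py]
  linarith

theorem stochastic_domination_bst (n : ℕ) (hn : 1 ≤ n) :
    ∀ t : ℝ,
      (((Finset.range n).filter (fun j : ℕ =>
          t < opNormSq ((j : ℝ) / n) + opNormSq (((n - 1 - j : ℕ) : ℝ) / n))).card : ℝ) / n
        ≤ (volume {u : ℝ | u ∈ Set.Icc (0 : ℝ) 1 ∧ t < 1 - u * (1 - u)}).toReal := by
  intro t
  set S := (Finset.range n).filter (fun j : ℕ =>
      t < opNormSq ((j : ℝ) / n) + opNormSq (((n - 1 - j : ℕ) : ℝ) / n)) with hSdef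
  set T := {u : ℝ | u ∈ Set.Icc (0 : ℝ) 1 ∧ t < 1 - u * (1 - u)} with hTdef
  have hn0 : (0:ℝ) < n := by exact_mod_cast hn
  have hsub : ∀ j ∈ S, Set.Ioo ((j:ℝ)/n) (((j:ℝ)+1)/n) ⊆ T := by
    intro j hj u hu
    rw [hSdef, Finset.mem_filter, Finset.mem_range] at hj
    obtain ⟨hjn, ht⟩ := hj
    have hcast : ((n - 1 - j : ℕ) : ℝ) = (n:ℝ) - 1 - j := by
      have h : n - 1 - j + (j + 1) = n := by omega
      have h2 := congrArg (Nat.cast : ℕ → ℝ) h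
      push_cast at h2
      linarith
    set x := (j:ℝ)/n with hxdef
    set y := ((n:ℝ) - 1 - j)/n with hydef
    have hjr : (j:ℝ) + 1 ≤ n := by exact_mod_cast hjn
    have hx0 : 0 ≤ x := by positivity
    have hy0 : 0 ≤ y := by
      apply div_nonneg _ (le_of_lt hn0)
      linarith
    have hxy : x + y ≤ 1 := by
      rw [hxdef, hydef, ← add_div, div_le_one hn0]; linarith
    have h1y : 1 - y = ((j:ℝ)+1)/n := by
      rw [hydef]; field_simp; ring
    have h1x : x ≤ u := le_of_lt hu.1
    have hu2 : u ≤ 1 - y := by rw [h1y]; exact le_of_lt hu.2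
    have hu0 : 0 ≤ u := le_trans hx0 h1x
    have hu1 : u ≤ 1 := by linarith
    have hprod : u * (1 - u) ≤ (1 - y) * (1 - x) :=
      mul_le_mul hu2 (by linarith) (by linarith) (by linarith)
    have hkey := key_ineq x y hx0 hy0 hxy
    rw [hcast] at ht
    refine ⟨⟨hu0, hu1⟩, ?_⟩
    have hfin : opNormSq x + opNormSq y ≤ 1 - u * (1 - u) := by nlinarith
    exact lt_of_lt_of_le ht hfin
  have hdisj : (S : Set ℕ).PairwiseDisjoint
      (fun j : ℕ => Set.Ioo ((j:ℝ)/n) (((j:ℝ)+1)/n)) := by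
    intro i _ j _ hij
    apply Set.disjoint_left.2
    intro u hui huj
    rcases lt_or_gt_of_ne hij with h | h
    · have hij' : (i:ℝ) + 1 ≤ j := by exact_mod_cast h
      have hle : ((i:ℝ)+1)/n ≤ (j:ℝ)/n := by gcongr
      linarith [hui.2, huj.1]
    · have hij' : (j:ℝ) + 1 ≤ i := by exact_mod_cast h
      have hle : ((j:ℝ)+1)/n ≤ (i:ℝ)/n := by gcongr
      linarith [hui.1, huj.2]
  have hmeas : volume (⋃ j ∈ S, Set.Ioo ((j:ℝ)/n) (((j:ℝ)+1)/n))
      = (S.card : ENNReal) * ENNReal.ofReal (1/n) := by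
    rw [measure_biUnion_finset hdisj (fun j _ => measurableSet_Ioo)]
    rw [Finset.sum_congr rfl (fun j _ => ?_), Finset.sum_const, nsmul_eq_mul]
    rw [Real.volume_Ioo]
    congr 1
    field_simp
    ring
  have hTfin : volume T ≤ 1 := by
    calc volume T ≤ volume (Set.Icc (0:ℝ) 1) := measure_mono (fun u hu => hu.1)
    _ = 1 := by simp [Real.volume_Icc]
  have hle : (S.card : ENNReal) * ENNReal.ofReal (1/n) ≤ volume T := by
    rw [← hmeas]
    exact measure_mono (Set.iUnion₂_subset hsub)
  have h1 : ((S.card : ENNReal) * ENNReal.ofReal (1/n)).toReal = (S.card : ℝ) / n := by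
    rw [ENNReal.toReal_mul, ENNReal.toReal_ofReal (by positivity)]
    simp [div_eq_mul_inv]
  calc (S.card : ℝ) / n = ((S.card : ENNReal) * ENNReal.ofReal (1/n)).toReal := h1.symm
  _ ≤ (volume T).toReal := ENNReal.toReal_mono
      (ne_of_lt (lt_of_le_of_lt hTfin ENNReal.one_lt_top)) hle
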